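/- Let n, m ≥ 1, set N = 2n+2m and γ = γ_{2n,2m}. Let π ∈ S_NC(2n,2m) be such that the subgroup generated by π and the interval involution I_N acts transitively on {1,…,N}. Then there are no two distinct even numbers r, s lying in the same cycle of γ (i.e., with r, s both in {1,…,2n} or both in {2n+1,…,N}) that lie in the same cycle of π⁻¹γ. -/

import Mathlib

noncomputable def cycleCount {N : ℕ} (π : Equiv.Perm (Fin N)) : ℕ :=
  Set.ncard {O : Set (Fin N) | ∃ x, O = {y | π.SameCycle x y}}

noncomputable def cyclesIn {N : ℕ} (π : Equiv.Perm (Fin N)) (C : Set (Fin N)) : ℕ :=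
  Set.ncard {O : Set (Fin N) | (∃ x, O = {y | π.SameCycle x y}) ∧ O ⊆ C}

/-- The annular permutation `γ_{p,q}` of `{1,…,p+q}` (0-indexed as `Fin (p+q)`),
with the two cycles `(1,…,p)` and `(p+1,…,p+q)`. -/
def annularGamma (p q : ℕ) : Equiv.Perm (Fin (p + q)) :=
  finSumFinEquiv.permCongr ((finRotate p).sumCongr (finRotate q))

/-- The interval involution `I_N = (1 2)(3 4)⋯(N-1 N)` of `{1,…,N}`
(0-indexed: swaps `2i ↔ 2i+1`), for `N` even. -/
def intervalInvolution (N : ℕ) : Equiv.Perm (Fin N) :=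
  Function.Involutive.toPerm
    (fun x => ⟨if x.val % 2 = 0 then min (x.val + 1) (N - 1) else x.val - 1, by
      rcases x with ⟨v, hv⟩
      dsimp only
      split <;> omega⟩)
    (by
      intro x
      rcases x with ⟨v, hv⟩
      apply Fin.ext
      dsimp only
      split_ifs <;> omega)

/-- The subgroup generated by `π` and `ρ` acts transitively on `Fin N`. -/
def JointTrans {N : ℕ} (π ρ : Equiv.Perm (Fin N)) : Prop :=
  ∀ x y : Fin N, ∃ g ∈ Subgroup.closure ({π, ρ} : Set (Equiv.Perm (Fin N))), g x = y

/-- `α` separates even numbers: no cycle of `α` contains two distinct even numbers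
(an element `x : Fin N` represents the number `x.val + 1`). -/
def SeparatesEven {N : ℕ} (α : Equiv.Perm (Fin N)) : Prop :=
  ∀ x y : Fin N, α.SameCycle x y → (x.val + 1) % 2 = 0 → (y.val + 1) % 2 = 0 → x = y

/-- `π ∈ S_NC(p,q)`: annular non-crossing permutations. -/
def AnnularNC (p q : ℕ) (π : Equiv.Perm (Fin (p + q))) : Prop :=
  JointTrans π (annularGamma p q) ∧
    cycleCount π + cycleCount (π⁻¹ * annularGamma p q) = p + q

/-- `A` witnesses bipartiteness of the graph `G_π`: `π(A) = A` and for each `i`,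
exactly one of the (1-indexed) numbers `2i-1`, `2i` belongs to `A`. -/
def BipartSet {N : ℕ} (π : Equiv.Perm (Fin N)) (A : Set (Fin N)) : Prop :=
  (⇑π) '' A = A ∧ ∀ i : ℕ, ∀ h : 2 * i + 1 < N,
    Xor' ((⟨2 * i, Nat.lt_of_succ_lt h⟩ : Fin N) ∈ A) ((⟨2 * i + 1, h⟩ : Fin N) ∈ A)

/-- The graph `G_π` is bipartite. -/
def GraphBipartite {N : ℕ} (π : Equiv.Perm (Fin N)) : Prop :=
  ∃ A : Set (Fin N), BipartSet π A

/-- `π ∈ J_{2n,2m}`: annular non-crossing, bipartite graph, and `π⁻¹γ` separates even. -/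
def memJ (n m : ℕ) (π : Equiv.Perm (Fin (2 * n + 2 * m))) : Prop :=
  AnnularNC (2 * n) (2 * m) π ∧ GraphBipartite π ∧
    SeparatesEven (π⁻¹ * annularGamma (2 * n) (2 * m))



open Equiv Equiv.Perm
set_option linter.unusedSectionVars false

namespace Aux

variable {α : Type*} [Fintype α] [DecidableEq α]

/-- The orbit equivalence relation of the subgroup generated by a set of permutations. -/
def relS (S : Set (Perm α)) : Setoid α where
  r x y := ∃ g ∈ Subgroup.closure S, g x = y
  iseqv := by
    refine ⟨fun x => ⟨1, one_mem _, rfl⟩, ?_, ?_⟩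
    · rintro x y ⟨g, hg, rfl⟩
      exact ⟨g⁻¹, inv_mem hg, by simp⟩
    · rintro x y z ⟨g, hg, rfl⟩ ⟨k, hk, rfl⟩
      exact ⟨k * g, mul_mem hk hg, by simp⟩

noncomputable def nclasses (s : Setoid α) : ℕ := Nat.card (Quotient s)

noncomputable def kap (S : Set (Perm α)) : ℕ := nclasses (relS S)

lemma relS_le {S : Set (Perm α)} {e : Setoid α}
    (h : ∀ g ∈ S, ∀ x, e.r x (g x)) : ∀ x y, (relS S).r x y → e.r x y := by
  rintro x y ⟨g, hg, rfl⟩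
  revert x
  induction hg using Subgroup.closure_induction with
  | mem g hg => exact h g hg
  | one => exact fun x => e.iseqv.refl x
  | mul g k hg hk ihg ihk => exact fun x => e.iseqv.trans (ihk x) (ihg (k x))
  | inv g hg ih => intro x; have := ih (g⁻¹ x); simp at this ⊢; exact e.iseqv.symm this

lemma relS_mono {S T : Set (Perm α)} (h : S ⊆ T) :
    ∀ x y, (relS S).r x y → (relS T).r x y := by
  rintro x y ⟨g, hg, rfl⟩
  exact ⟨g, Subgroup.closure_mono h hg, rfl⟩

lemma relS_of_sameCycle {S : Set (Perm α)} {g : Perm α} (hg : g ∈ Subgroup.closure S)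
    {x y : α} (h : g.SameCycle x y) : (relS S).r x y := by
  obtain ⟨i, hi⟩ := h
  exact ⟨g ^ i, zpow_mem hg i, hi⟩

lemma rel_singleton (σ : Perm α) (x y : α) :
    (relS {σ}).r x y ↔ σ.SameCycle x y := by
  constructor
  · rintro ⟨g, hg, rfl⟩
    obtain ⟨i, rfl⟩ := Subgroup.mem_closure_singleton.mp hg
    exact ⟨i, rfl⟩
  · exact relS_of_sameCycle (Subgroup.subset_closure (Set.mem_singleton σ))

/-- Number of cycles (orbits) of a permutation. -/
noncomputable def cnt (σ : Perm α) : ℕ := nclasses (relS ({σ} : Set (Perm α)))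

lemma nclasses_mono {s t : Setoid α} (h : ∀ x y, s.r x y → t.r x y) :
    nclasses t ≤ nclasses s := by
  have : Function.Surjective (Quotient.map' (id : α → α) h : Quotient s → Quotient t) := by
    intro q
    induction q using Quotient.inductionOn' with
    | h x => exact ⟨Quotient.mk'' x, rfl⟩
  exact Nat.card_le_card_of_surjective _ this

lemma nclasses_le_card (s : Setoid α) : nclasses s ≤ Fintype.card α := by
  have : Function.Surjective (Quotient.mk s) := Quotient.mk_surjective
  calc nclasses s ≤ Nat.card α := Nat.card_le_card_of_surjective _ this
  _ = Fintype.card α := Nat.card_eq_fintype_card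

lemma nclasses_lt_card {s : Setoid α} {a b : α} (hab : a ≠ b) (h : s.r a b) :
    nclasses s < Fintype.card α := by
  classical
  have hsurj : Function.Surjective (Quotient.mk s) := Quotient.mk_surjective
  have hninj : ¬ Function.Injective (Quotient.mk s) := by
    intro hinj
    exact hab (hinj (Quotient.sound h))
  have := Fintype.card_lt_of_surjective_not_injective _ hsurj hninj
  · simpa [nclasses, Nat.card_eq_fintype_card] using this




/-- The equivalence relation `s` with the classes of `a` and `b` merged. -/
def mergeS (s : Setoid α) (a b : α) : Setoid α where
  r x y := s.r x y ∨ ((s.r x a ∨ s.r x b) ∧ (s.r y a ∨ s.r y b))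
  iseqv := by
    obtain ⟨refl, symm, trans⟩ := s.iseqv
    refine ⟨fun x => Or.inl (refl x), ?_, ?_⟩
    · rintro x y (h | ⟨h1, h2⟩)
      · exact Or.inl (symm h)
      · exact Or.inr ⟨h2, h1⟩
    · rintro x y z (h | ⟨h1, h2⟩) (g | ⟨g1, g2⟩)
      · exact Or.inl (trans h g)
      · exact Or.inr ⟨Or.imp (fun u => trans h u) (fun u => trans h u) g1, g2⟩
      · exact Or.inr ⟨h1, Or.imp (fun u => trans (symm g) u) (fun u => trans (symm g) u) h2⟩
      · exact Or.inr ⟨h1, g2⟩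

lemma mergeS_self {s : Setoid α} {a b : α} (h : s.r a b) :
    ∀ x y, (mergeS s a b).r x y ↔ s.r x y := by
  obtain ⟨refl, symm, trans⟩ := s.iseqv
  intro x y
  constructor
  · rintro (hxy | ⟨h1 | h1, h2 | h2⟩)
    · exact hxy
    · exact trans h1 (symm h2)
    · exact trans (trans h1 h) (symm h2)
    · exact trans (trans h1 (symm h)) (symm h2)
    · exact trans h1 (symm h2)
  · exact Or.inl

lemma nclasses_le_merge_add_one (s : Setoid α) (a b : α) :
    nclasses s ≤ nclasses (mergeS s a b) + 1 := by
  classical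
  set t := mergeS s a b with ht
  have hle : ∀ x y, s.r x y → t.r x y := fun x y h => Or.inl h
  let f : Quotient s → Quotient t := Quotient.map' id hle
  let j : Quotient s → Option (Quotient t) := fun q =>
    if q = Quotient.mk s b then none else some (f q)
  have hj : Function.Injective j := by
    intro q1 q2 h
    simp only [j] at h
    by_cases h1 : q1 = Quotient.mk s b <;> by_cases h2 : q2 = Quotient.mk s b
    · exact h1.trans h2.symm
    · rw [if_pos h1, if_neg h2] at h; exact absurd h.symm (Option.some_ne_none _)
    · rw [if_neg h1, if_pos h2] at h; exact absurd h (Option.some_ne_none _)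
    · rw [if_neg h1, if_neg h2, Option.some_inj] at h
      induction q1 using Quotient.inductionOn' with
      | h x =>
      induction q2 using Quotient.inductionOn' with
      | h y =>
      have hxb : ¬ s.r x b := fun hc => h1 (Quotient.sound' hc)
      have hyb : ¬ s.r y b := fun hc => h2 (Quotient.sound' hc)
      have hxy : t.r x y := Quotient.exact' h
      rcases hxy with hxy | ⟨hxa | hxb2, hya | hyb2⟩
      · exact Quotient.sound' hxy
      · exact Quotient.sound' (s.iseqv.trans hxa (s.iseqv.symm hya))
      · exact absurd hyb2 hyb
      · exact absurd hxb2 hxb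
      · exact absurd hxb2 hxb
  calc nclasses s ≤ Nat.card (Option (Quotient t)) := Nat.card_le_card_of_injective j hj
  _ = nclasses t + 1 := Finite.card_option

lemma nclasses_add_one_le {s t : Setoid α} {a b : α}
    (hle : ∀ x y, s.r x y → t.r x y) (hab : ¬ s.r a b) (htab : t.r a b) :
    nclasses t + 1 ≤ nclasses s := by
  classical
  let f : Quotient s → Quotient t := Quotient.map' id hle
  have hsurj : Function.Surjective f := by
    intro q
    induction q using Quotient.inductionOn' with
    | h x => exact ⟨Quotient.mk'' x, rfl⟩
  have hninj : ¬ Function.Injective f := by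
    intro hinj
    have : (Quotient.mk'' a : Quotient s) = Quotient.mk'' b := by
      apply hinj
      exact Quotient.sound' htab
    exact hab (Quotient.exact' this)
  have h := Fintype.card_lt_of_surjective_not_injective f hsurj hninj
  have e1 : nclasses t = Fintype.card (Quotient t) := Nat.card_eq_fintype_card
  have e2 : nclasses s = Fintype.card (Quotient s) := Nat.card_eq_fintype_card
  omega

lemma two_le_nclasses {s : Setoid α} {a b : α} (h : ¬ s.r a b) : 2 ≤ nclasses s := by
  have : (Quotient.mk s a) ≠ Quotient.mk s b := fun hc => h (Quotient.exact hc)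
  have : Nontrivial (Quotient s) := ⟨_, _, this⟩
  have h2 : 1 < Nat.card (Quotient s) := Finite.one_lt_card
  unfold nclasses; omega

lemma exists_not_rel {s : Setoid α} (h : 2 ≤ nclasses s) : ∃ a b, ¬ s.r a b := by
  have : Nontrivial (Quotient s) := Finite.one_lt_card_iff_nontrivial.mp (by unfold nclasses at h; omega)
  obtain ⟨q1, q2, hq⟩ := this
  induction q1 using Quotient.inductionOn' with
  | h x =>
  induction q2 using Quotient.inductionOn' with
  | h y =>
  exact ⟨x, y, fun hc => hq (Quotient.sound' hc)⟩


lemma zpow_periodic (σ : Perm α) (x : α) {m : ℕ} (hm : 0 < m) (hfix : (σ ^ m) x = x)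
    (j : ℤ) : (σ ^ j) x = (σ ^ ((j % (m : ℤ)).toNat)) x := by
  have hdecomp : j = (j % (m : ℤ)) + (m : ℤ) * (j / (m : ℤ)) := by
    have := Int.mul_ediv_add_emod j (m : ℤ); omega
  have h1 : (σ ^ j) x = (σ ^ (j % (m : ℤ))) ((σ ^ ((m : ℤ) * (j / (m : ℤ)))) x) := by
    conv_lhs => rw [hdecomp]
    rw [zpow_add]
    rfl
  have h2 : (σ ^ ((m : ℤ) * (j / (m : ℤ)))) x = x := by
    rw [zpow_mul, zpow_natCast]
    exact Equiv.Perm.zpow_apply_eq_self_of_apply_eq_self hfix _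
  have h3 : (σ ^ (j % (m : ℤ))) = σ ^ ((j % (m : ℤ)).toNat) := by
    rw [← zpow_natCast, Int.toNat_of_nonneg (Int.emod_nonneg j (by exact_mod_cast hm.ne'))]
  rw [h1, h2, h3]

lemma sameCycle_mul_swap_iff {ρ : Perm α} {a b : α} (hab : a ≠ b) :
    ρ.SameCycle a b ↔ ¬ (ρ * Equiv.swap a b).SameCycle a b := by
  classical
  set τ := Equiv.swap a b with hτ
  have hP : ∃ k, 0 < k ∧ ((ρ ^ k) b = a ∨ (ρ ^ k) b = b) := by
    refine ⟨orderOf ρ, orderOf_pos ρ, Or.inr ?_⟩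
    rw [pow_orderOf_eq_one]; rfl
  set m := Nat.find hP with hmdef
  obtain ⟨hm0, hmret⟩ := Nat.find_spec hP
  have hni : ∀ i, 1 ≤ i → i < m → (ρ ^ i) b ≠ a ∧ (ρ ^ i) b ≠ b := by
    intro i h1 h2
    have := Nat.find_min hP h2
    push_neg at this
    exact this (by omega)
  have key : ∀ i, 1 ≤ i → i ≤ m → ((ρ * τ) ^ i) a = (ρ ^ i) b := by
    intro i h1 h2
    induction i, h1 using Nat.le_induction with
    | base => simp [τ, Equiv.swap_apply_left]
    | succ i hi ih =>
      have hlt : i < m := by omega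
      have hih := ih (by omega)
      rw [pow_succ', mul_apply, hih, pow_succ', mul_apply, mul_apply]
      congr 1
      exact Equiv.swap_apply_of_ne_of_ne (hni i hi hlt).1 (hni i hi hlt).2
  rcases hmret with hret | hret
  · -- (ρ ^ m) b = a : a, b in the same ρ-cycle, different (ρτ)-cycles
    have hfix : ((ρ * τ) ^ m) a = a := by rw [key m hm0 le_rfl, hret]
    constructor
    · intro _
      rintro ⟨j, hj⟩
      rw [zpow_periodic (ρ * τ) a hm0 hfix j] at hj
      set r := ((j % (m : ℤ)).toNat) with hr
      have hrm : r < m := by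
        have h1 : j % (m : ℤ) < (m : ℤ) := Int.emod_lt_of_pos j (by exact_mod_cast hm0)
        omega
      rcases Nat.eq_zero_or_pos r with h0 | hpos
      · rw [h0] at hj; simp at hj; exact hab hj
      · rw [key r hpos hrm.le] at hj
        exact (hni r hpos hrm).2 hj
    · intro _
      exact Equiv.Perm.SameCycle.symm ⟨(m : ℤ), by rw [zpow_natCast, hret]⟩
  · -- (ρ ^ m) b = b : a, b in different ρ-cycles, same (ρτ)-cycle
    have hSC' : (ρ * τ).SameCycle a b := ⟨(m : ℤ), by rw [zpow_natCast, key m hm0 le_rfl, hret]⟩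
    have hnSC : ¬ ρ.SameCycle a b := by
      rintro hsc
      obtain ⟨j, hj⟩ := hsc.symm
      rw [zpow_periodic ρ b hm0 hret j] at hj
      set r := ((j % (m : ℤ)).toNat) with hr
      have hrm : r < m := by
        have h1 : j % (m : ℤ) < (m : ℤ) := Int.emod_lt_of_pos j (by exact_mod_cast hm0)
        omega
      rcases Nat.eq_zero_or_pos r with h0 | hpos
      · rw [h0] at hj; simp at hj; exact hab hj.symm
      · exact (hni r hpos hrm).1 hj
    exact ⟨fun h => absurd h hnSC, fun h => absurd hSC' h⟩

lemma rel_mul_swap_le_merge (ρ : Perm α) (a b : α) :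
    ∀ x y, (relS {ρ * Equiv.swap a b}).r x y → (mergeS (relS {ρ}) a b).r x y := by
  apply relS_le
  rintro g hg x
  rw [Set.mem_singleton_iff] at hg
  subst hg
  by_cases hxa : x = a
  · have hval : (ρ * Equiv.swap a b) x = ρ b := by
      simp [mul_apply, hxa]
    rw [hval]
    refine Or.inr ⟨Or.inl (by rw [hxa]), Or.inr ?_⟩
    exact (rel_singleton ρ (ρ b) b).mpr (Equiv.Perm.sameCycle_apply_left.mpr (Equiv.Perm.SameCycle.refl _ _))
  · by_cases hxb : x = b
    · have hval : (ρ * Equiv.swap a b) x = ρ a := by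
        simp [mul_apply, hxb]
      rw [hval]
      refine Or.inr ⟨Or.inr (by rw [hxb]), Or.inl ?_⟩
      exact (rel_singleton ρ (ρ a) a).mpr (Equiv.Perm.sameCycle_apply_left.mpr (Equiv.Perm.SameCycle.refl _ _))
    · have hval : (ρ * Equiv.swap a b) x = ρ x := by
        rw [mul_apply, Equiv.swap_apply_of_ne_of_ne hxa hxb]
      rw [hval]
      exact Or.inl ((rel_singleton ρ x (ρ x)).mpr ⟨1, by simp⟩)

lemma mul_swap_mul_swap (ρ : Perm α) (a b : α) : (ρ * Equiv.swap a b) * Equiv.swap a b = ρ := by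
  rw [mul_assoc, Equiv.swap_mul_self, mul_one]

lemma cnt_mul_swap_le (ρ : Perm α) (a b : α) :
    cnt (ρ * Equiv.swap a b) ≤ cnt ρ + 1 := by
  have h1 := rel_mul_swap_le_merge (ρ * Equiv.swap a b) a b
  rw [mul_swap_mul_swap] at h1
  calc cnt (ρ * Equiv.swap a b)
      ≤ nclasses (mergeS (relS {ρ * Equiv.swap a b}) a b) + 1 :=
        nclasses_le_merge_add_one _ a b
    _ ≤ cnt ρ + 1 := Nat.add_le_add_right (nclasses_mono h1) 1

lemma cnt_add_one_le_mul_swap {ρ : Perm α} {a b : α} (hab : a ≠ b)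
    (h : ρ.SameCycle a b) : cnt ρ + 1 ≤ cnt (ρ * Equiv.swap a b) := by
  have hrab : (relS {ρ}).r a b := (rel_singleton ρ a b).mpr h
  have hle0 := rel_mul_swap_le_merge ρ a b
  have hle : ∀ x y, (relS {ρ * Equiv.swap a b}).r x y → (relS {ρ}).r x y :=
    fun x y hxy => (mergeS_self hrab x y).mp (hle0 x y hxy)
  have hnab : ¬ (relS {ρ * Equiv.swap a b}).r a b := by
    rw [rel_singleton]
    exact (sameCycle_mul_swap_iff hab).mp h
  exact nclasses_add_one_le hle hnab hrab

lemma cnt_mul_swap_add_one_le {ρ : Perm α} {a b : α} (hab : a ≠ b)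
    (h : ¬ ρ.SameCycle a b) : cnt (ρ * Equiv.swap a b) + 1 ≤ cnt ρ := by
  have hSC : (ρ * Equiv.swap a b).SameCycle a b := by
    by_contra hc
    exact h ((sameCycle_mul_swap_iff hab).mpr hc)
  have hrab : (relS {ρ * Equiv.swap a b}).r a b := (rel_singleton _ a b).mpr hSC
  have hle0 := rel_mul_swap_le_merge (ρ * Equiv.swap a b) a b
  rw [mul_swap_mul_swap] at hle0
  have hle : ∀ x y, (relS {ρ}).r x y → (relS {ρ * Equiv.swap a b}).r x y :=
    fun x y hxy => (mergeS_self hrab x y).mp (hle0 x y hxy)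
  have hnab : ¬ (relS {ρ}).r a b := by
    rw [rel_singleton]; exact h
  exact nclasses_add_one_le hle hnab hrab

lemma cnt_one : cnt (1 : Perm α) = Fintype.card α := by
  have hbij : Function.Bijective (Quotient.mk (relS ({1} : Set (Perm α)))) := by
    constructor
    · intro x y h
      have h2 := (rel_singleton (1 : Perm α) x y).mp (Quotient.exact h)
      rwa [Equiv.Perm.sameCycle_one] at h2
    · exact Quotient.mk_surjective
  have := Nat.card_eq_of_bijective _ hbij
  rw [cnt, nclasses, ← this, Nat.card_eq_fintype_card]

lemma relS_pair_left (σ φ : Perm α) (x : α) : (relS {σ, φ}).r x (σ x) :=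
  ⟨σ, Subgroup.subset_closure (Set.mem_insert _ _), rfl⟩

lemma relS_pair_right (σ φ : Perm α) (x : α) : (relS {σ, φ}).r x (φ x) :=
  ⟨φ, Subgroup.subset_closure (Set.mem_insert_of_mem _ rfl), rfl⟩

lemma kap_pair_one (σ : Perm α) : kap {σ, (1 : Perm α)} = cnt σ := by
  apply le_antisymm
  · exact nclasses_mono (relS_mono (Set.singleton_subset_iff.mpr (Set.mem_insert _ _)))
  · apply nclasses_mono
    apply relS_le
    intro g hg x
    rw [Set.mem_insert_iff, Set.mem_singleton_iff] at hg
    rcases hg with h | h <;> rw [h]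
    · exact (rel_singleton σ x (σ x)).mpr ⟨1, by simp⟩
    · exact (relS {σ}).iseqv.refl x

lemma genus_aux : ∀ (k : ℕ) (φ σ : Perm α), Fintype.card α - cnt φ ≤ k →
    cnt σ + cnt φ + cnt (σ * φ) ≤ Fintype.card α + 2 * kap {σ, φ} := by
  intro k
  induction k with
  | zero =>
    intro φ σ hk
    by_cases hφ : φ = 1
    · subst hφ
      rw [cnt_one, mul_one, kap_pair_one]
      omega
    · exfalso
      obtain ⟨a, ha⟩ : ∃ a, φ a ≠ a := by
        by_contra hcon; push_neg at hcon; exact hφ (Equiv.ext hcon)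
      have hab : a ≠ φ a := fun h => ha h.symm
      have hSC : φ.SameCycle a (φ a) := ⟨1, by simp⟩
      have hlt : cnt φ < Fintype.card α :=
        nclasses_lt_card hab ((rel_singleton φ a (φ a)).mpr hSC)
      omega
  | succ k ih =>
    intro φ σ hk
    by_cases hφ : φ = 1
    · subst hφ
      rw [cnt_one, mul_one, kap_pair_one]
      omega
    · obtain ⟨a, ha⟩ : ∃ a, φ a ≠ a := by
        by_contra hcon; push_neg at hcon; exact hφ (Equiv.ext hcon)
      set b := φ a with hb
      have hab : a ≠ b := fun h => ha h.symm
      set τ := Equiv.swap a b with hτ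
      set φ' := φ * τ with hφ'
      have hSCφ : φ.SameCycle a b := ⟨1, by simp [hb]⟩
      have h1 : cnt φ + 1 ≤ cnt φ' := cnt_add_one_le_mul_swap hab hSCφ
      have hltφ : cnt φ < Fintype.card α :=
        nclasses_lt_card hab ((rel_singleton φ a b).mpr hSCφ)
      have hrec : Fintype.card α - cnt φ' ≤ k := by omega
      have H' := ih φ' σ hrec
      set ρ := σ * φ' with hρ
      have hprod : σ * φ = ρ * τ := by
        rw [hρ, mul_assoc, hφ', mul_swap_mul_swap]
      have hmem : ρ ∈ Subgroup.closure ({σ, φ'} : Set (Perm α)) :=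
        mul_mem (Subgroup.subset_closure (Set.mem_insert _ _))
          (Subgroup.subset_closure (Set.mem_insert_of_mem _ rfl))
      have hφ'x : ∀ x, x ≠ a → x ≠ b → φ' x = φ x := by
        intro x h1 h2
        rw [hφ', mul_apply, hτ, Equiv.swap_apply_of_ne_of_ne h1 h2]
      have hφ'b : φ' b = φ a := by
        rw [hφ', mul_apply, hτ, Equiv.swap_apply_right]
      have hφ'a : φ' a = φ b := by
        rw [hφ', mul_apply, hτ, Equiv.swap_apply_left]
      by_cases hc : ρ.SameCycle a b
      · have h2 : cnt (σ * φ) ≤ cnt ρ + 1 := by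
          rw [hprod]; exact cnt_mul_swap_le ρ a b
        have hrab : (relS {σ, φ'}).r a b := relS_of_sameCycle hmem hc
        have hle : ∀ x y, (relS {σ, φ}).r x y → (relS {σ, φ'}).r x y := by
          apply relS_le
          intro g hg x
          rw [Set.mem_insert_iff, Set.mem_singleton_iff] at hg
          rcases hg with h | h <;> rw [h]
          · exact relS_pair_left _ _ x
          · by_cases hxa : x = a
            · rw [hxa, ← hb]; exact hrab
            · by_cases hxb : x = b
              · rw [hxb]
                have e1 : (relS {σ, φ'}).r b a := (relS {σ, φ'}).iseqv.symm hrab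
                have e2 : (relS {σ, φ'}).r a (φ' a) := relS_pair_right _ _ a
                rw [hφ'a] at e2
                exact (relS {σ, φ'}).iseqv.trans e1 e2
              · have := relS_pair_right σ φ' x
                rw [hφ'x x hxa hxb] at this
                exact this
        have h3 : kap {σ, φ'} ≤ kap {σ, φ} := nclasses_mono hle
        omega
      · have h2 : cnt (σ * φ) + 1 ≤ cnt ρ := by
          rw [hprod]; exact cnt_mul_swap_add_one_le hab hc
        have hle : ∀ x y, (relS {σ, φ}).r x y → (mergeS (relS {σ, φ'}) a b).r x y := by
          apply relS_le
          intro g hg x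
          rw [Set.mem_insert_iff, Set.mem_singleton_iff] at hg
          rcases hg with h | h <;> rw [h]
          · exact Or.inl (relS_pair_left _ _ x)
          · by_cases hxa : x = a
            · rw [hxa, ← hb]
              exact Or.inr ⟨Or.inl ((relS {σ, φ'}).iseqv.refl a),
                Or.inr ((relS {σ, φ'}).iseqv.refl b)⟩
            · by_cases hxb : x = b
              · rw [hxb]
                have e2 : (relS {σ, φ'}).r a (φ' a) := relS_pair_right _ _ a
                rw [hφ'a] at e2
                refine Or.inr ⟨Or.inr ((relS {σ, φ'}).iseqv.refl b),
                  Or.inl ((relS {σ, φ'}).iseqv.symm e2)⟩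
              · have := relS_pair_right σ φ' x
                rw [hφ'x x hxa hxb] at this
                exact Or.inl this
        have h3 : kap {σ, φ'} ≤ kap {σ, φ} + 1 := by
          calc kap {σ, φ'} ≤ nclasses (mergeS (relS {σ, φ'}) a b) + 1 :=
                nclasses_le_merge_add_one _ a b
            _ ≤ kap {σ, φ} + 1 := Nat.add_le_add_right (nclasses_mono hle) 1
        omega

lemma genus_inequality (σ φ : Perm α) :
    cnt σ + cnt φ + cnt (σ * φ) ≤ Fintype.card α + 2 * kap {σ, φ} :=
  genus_aux (Fintype.card α - cnt φ) φ σ le_rfl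

lemma zpow_pred_invariant (σ : Perm α) (P : α → Prop) (h : ∀ x, P (σ x) ↔ P x) :
    ∀ (j : ℤ) (x : α), P ((σ ^ j) x) ↔ P x := by
  have key : ∀ (f : Perm α), (∀ x, P (f x) ↔ P x) → ∀ (n : ℕ) (x : α), P ((f ^ n) x) ↔ P x := by
    intro f hf n
    induction n with
    | zero => intro x; simp
    | succ n ih =>
      intro x
      rw [pow_succ', mul_apply]
      exact (hf _).trans (ih x)
  have hinv : ∀ x, P (σ⁻¹ x) ↔ P x := by
    intro x
    have := h (σ⁻¹ x)
    rw [show σ (σ⁻¹ x) = x from σ.apply_symm_apply x] at this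
    exact this.symm
  intro j x
  rcases j with n | n
  · exact key σ h n x
  · rw [zpow_negSucc, ← inv_pow]
    exact key σ⁻¹ hinv (n + 1) x

end Aux

namespace AuxG

open Aux

lemma gamma_apply_lt {p q : ℕ} (x : Fin (p + q)) (h : x.val < p) :
    annularGamma p q x = Fin.castAdd q (finRotate p ⟨x.val, h⟩) := by
  have hx : finSumFinEquiv.symm x = Sum.inl (⟨x.val, h⟩ : Fin p) := by
    rw [Equiv.symm_apply_eq, finSumFinEquiv_apply_left]
    apply Fin.ext
    simp
  rw [annularGamma, Equiv.permCongr_apply, hx]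
  simp

lemma gamma_apply_ge {p q : ℕ} (x : Fin (p + q)) (h : p ≤ x.val) :
    annularGamma p q x = Fin.natAdd p (finRotate q ⟨x.val - p, by omega⟩) := by
  have hlt : x.val - p < q := by have := x.isLt; omega
  have hx : finSumFinEquiv.symm x = Sum.inr (⟨x.val - p, hlt⟩ : Fin q) := by
    rw [Equiv.symm_apply_eq, finSumFinEquiv_apply_right]
    apply Fin.ext
    simp
    omega
  rw [annularGamma, Equiv.permCongr_apply, hx]
  simp

lemma finRotate_val {p : ℕ} (i : Fin p) (h : i.val + 1 < p) :
    (finRotate p i).val = i.val + 1 := by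
  obtain ⟨p', rfl⟩ : ∃ p', p = p' + 1 := ⟨p - 1, by omega⟩
  rw [finRotate_succ_apply, Fin.val_add_one]
  split
  · next heq =>
    exfalso
    rw [heq, Fin.val_last] at h
    omega
  · rfl

lemma gamma_val_even {p q : ℕ} (hp : p % 2 = 0) (hq : q % 2 = 0) (x : Fin (p + q))
    (hx : x.val % 2 = 0) : (annularGamma p q x).val = x.val + 1 := by
  by_cases h : x.val < p
  · rw [gamma_apply_lt x h]
    have h2 : (⟨x.val, h⟩ : Fin p).val + 1 < p := by simp; omega
    have hv : (finRotate p ⟨x.val, h⟩).val = x.val + 1 := finRotate_val (⟨x.val, h⟩ : Fin p) h2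
    show (finRotate p ⟨x.val, h⟩).val = x.val + 1
    exact hv
  · push_neg at h
    rw [gamma_apply_ge x h]
    have hlt : x.val - p < q := by have := x.isLt; omega
    have h2 : (⟨x.val - p, hlt⟩ : Fin q).val + 1 < q := by simp; omega
    have hv : (finRotate q ⟨x.val - p, hlt⟩).val = x.val - p + 1 :=
      finRotate_val (⟨x.val - p, hlt⟩ : Fin q) h2
    show p + (finRotate q ⟨x.val - p, hlt⟩).val = x.val + 1
    omega

lemma gamma_val_lt_iff {p q : ℕ} (x : Fin (p + q)) :
    (annularGamma p q x).val < p ↔ x.val < p := by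
  by_cases h : x.val < p
  · rw [gamma_apply_lt x h]
    simpa using h
  · push_neg at h
    rw [gamma_apply_ge x h]
    simp
    omega

lemma two_le_cnt_gamma {p q : ℕ} (hp : 0 < p) (hq : 0 < q) :
    2 ≤ cnt (annularGamma p q) := by
  apply two_le_nclasses (a := (⟨0, by omega⟩ : Fin (p + q))) (b := ⟨p, by omega⟩)
  intro hrel
  rw [rel_singleton] at hrel
  obtain ⟨j, hj⟩ := hrel
  have hinv := zpow_pred_invariant (annularGamma p q) (fun z => z.val < p)
    (fun z => gamma_val_lt_iff z) j ⟨0, by omega⟩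
  simp only [hj] at hinv
  simp at hinv
  omega

end AuxG
namespace AuxG

lemma cycleCount_eq_cnt {N : ℕ} (σ : Equiv.Perm (Fin N)) : cycleCount σ = Aux.cnt σ := by
  classical
  have hwd : ∀ (x x' : Fin N), (Aux.relS {σ}).r x x' →
      ({y | σ.SameCycle x y} : Set (Fin N)) = {y | σ.SameCycle x' y} := by
    intro x x' hxx
    rw [Aux.rel_singleton] at hxx
    ext y
    simp only [Set.mem_setOf_eq]
    exact ⟨fun h => hxx.symm.trans h, fun h => hxx.trans h⟩
  let f : Quotient (Aux.relS ({σ} : Set (Equiv.Perm (Fin N)))) →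
      {O : Set (Fin N) // O ∈ {O : Set (Fin N) | ∃ x, O = {y | σ.SameCycle x y}}} :=
    Quotient.lift (fun x => ⟨{y | σ.SameCycle x y}, ⟨x, rfl⟩⟩)
      (fun x x' hxx => Subtype.ext (hwd x x' hxx))
  have hbij : Function.Bijective f := by
    constructor
    · intro q1 q2 h
      induction q1 using Quotient.inductionOn' with
      | h x =>
      induction q2 using Quotient.inductionOn' with
      | h x' =>
      have hsets : ({y | σ.SameCycle x y} : Set (Fin N)) = {y | σ.SameCycle x' y} :=
        congrArg Subtype.val h
      have hx' : σ.SameCycle x x' := by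
        have hmem : x' ∈ {y | σ.SameCycle x y} := by
          rw [hsets]; exact Equiv.Perm.SameCycle.refl σ x'
        exact hmem
      exact Quotient.sound' ((Aux.rel_singleton σ x x').mpr hx')
    · rintro ⟨O, x, rfl⟩
      exact ⟨Quotient.mk'' x, rfl⟩
  have hcard := Nat.card_eq_of_bijective f hbij
  have h2 : cycleCount σ = Nat.card
      {O : Set (Fin N) // O ∈ {O : Set (Fin N) | ∃ x, O = {y | σ.SameCycle x y}}} := by
    unfold cycleCount
    rw [← Nat.card_coe_set_eq]
  rw [h2, ← hcard]
  rfl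

lemma interval_val_even {N : ℕ} (hN : N % 2 = 0) (z : Fin N) (hz : z.val % 2 = 0) :
    ((intervalInvolution N) z).val = z.val + 1 := by
  have hlt := z.isLt
  show (if z.val % 2 = 0 then min (z.val + 1) (N - 1) else z.val - 1) = z.val + 1
  rw [if_pos hz]
  omega

lemma interval_val_odd {N : ℕ} (z : Fin N) (hz : z.val % 2 = 1) :
    ((intervalInvolution N) z).val = z.val - 1 := by
  show (if z.val % 2 = 0 then min (z.val + 1) (N - 1) else z.val - 1) = z.val - 1
  rw [if_neg (by omega)]

lemma interval_invol {N : ℕ} (hN : N % 2 = 0) (z : Fin N) :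
    intervalInvolution N (intervalInvolution N z) = z := by
  have hlt := z.isLt
  apply Fin.ext
  rcases Nat.even_or_odd z.val with he | ho
  · have hz : z.val % 2 = 0 := Nat.even_iff.mp he
    have h1 : ((intervalInvolution N) z).val = z.val + 1 := interval_val_even hN z hz
    have h2 : ((intervalInvolution N) (intervalInvolution N z)).val
        = ((intervalInvolution N) z).val - 1 := interval_val_odd _ (by omega)
    omega
  · have hz : z.val % 2 = 1 := Nat.odd_iff.mp ho
    have h1 : ((intervalInvolution N) z).val = z.val - 1 := interval_val_odd z hz
    have h2 : ((intervalInvolution N) (intervalInvolution N z)).val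
        = ((intervalInvolution N) z).val + 1 := interval_val_even hN _ (by omega)
    omega

end AuxG


theorem stmt_3 (n m : ℕ) (hn : 1 ≤ n) (hm : 1 ≤ m)
    (π : Equiv.Perm (Fin (2 * n + 2 * m)))
    (hπ : AnnularNC (2 * n) (2 * m) π)
    (htrans : JointTrans π (intervalInvolution (2 * n + 2 * m))) :
    ∀ r s : Fin (2 * n + 2 * m), r ≠ s →
      (r.val + 1) % 2 = 0 → (s.val + 1) % 2 = 0 →
      (annularGamma (2 * n) (2 * m)).SameCycle r s →
      ¬ (π⁻¹ * annularGamma (2 * n) (2 * m)).SameCycle r s := by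
  classical
  intro r s hne hre hse hγsc hπγsc
  set γ := annularGamma (2 * n) (2 * m) with hγdef
  set τ := Equiv.swap r s with hτdef
  have hNmod : (2 * n + 2 * m) % 2 = 0 := by omega
  have hrodd : r.val % 2 = 1 := by omega
  have hsodd : s.val % 2 = 1 := by omega
  have h1 : Aux.cnt (π⁻¹ * γ) + 1 ≤ Aux.cnt ((π⁻¹ * γ) * τ) :=
    Aux.cnt_add_one_le_mul_swap hne hπγsc
  have h2 : Aux.cnt γ + 1 ≤ Aux.cnt (γ * τ) := Aux.cnt_add_one_le_mul_swap hne hγsc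
  have h3 : 2 ≤ Aux.cnt γ := AuxG.two_le_cnt_gamma (by omega) (by omega)
  have hsum : Aux.cnt π + Aux.cnt (π⁻¹ * γ) = 2 * n + 2 * m := by
    have h := hπ.2
    rwa [AuxG.cycleCount_eq_cnt, AuxG.cycleCount_eq_cnt] at h
  set φ := π⁻¹ * (γ * τ) with hφdef
  have hφeq : φ = (π⁻¹ * γ) * τ := by rw [hφdef, mul_assoc]
  have hπφ : π * φ = γ * τ := by
    rw [hφdef, ← mul_assoc, mul_inv_cancel, one_mul]
  have hgen := Aux.genus_inequality π φ
  rw [hπφ] at hgen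
  have hcard : Fintype.card (Fin (2 * n + 2 * m)) = 2 * n + 2 * m := Fintype.card_fin _
  have h1' : Aux.cnt (π⁻¹ * γ) + 1 ≤ Aux.cnt φ := by rw [hφeq]; exact h1
  have hkap : 2 ≤ Aux.kap {π, φ} := by omega
  obtain ⟨x, y, hxy⟩ := Aux.exists_not_rel hkap
  set U := {z : Fin (2 * n + 2 * m) | (Aux.relS {π, φ}).r x z} with hUdef
  have hxU : x ∈ U := (Aux.relS {π, φ}).iseqv.refl x
  have hyU : y ∉ U := hxy
  have hUg : ∀ g ∈ Subgroup.closure ({π, φ} : Set (Equiv.Perm (Fin (2 * n + 2 * m)))),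
      ∀ z, z ∈ U ↔ g z ∈ U := by
    intro g hg z
    constructor
    · intro hz
      exact (Aux.relS {π, φ}).iseqv.trans hz ⟨g, hg, rfl⟩
    · intro hz
      have hrel : (Aux.relS {π, φ}).r (g z) z := ⟨g⁻¹, inv_mem hg, by simp⟩
      exact (Aux.relS {π, φ}).iseqv.trans hz hrel
  have hUπ : ∀ z, z ∈ U ↔ π z ∈ U :=
    fun z => hUg π (Subgroup.subset_closure (Set.mem_insert _ _)) z
  have hβmem : γ * τ ∈ Subgroup.closure ({π, φ} : Set (Equiv.Perm (Fin (2 * n + 2 * m)))) := by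
    rw [← hπφ]
    exact mul_mem (Subgroup.subset_closure (Set.mem_insert _ _))
      (Subgroup.subset_closure (Set.mem_insert_of_mem _ rfl))
  have hUβ : ∀ z, z ∈ U ↔ (γ * τ) z ∈ U := fun z => hUg _ hβmem z
  have hpt : ∀ z : Fin (2 * n + 2 * m), z.val % 2 = 0 →
      intervalInvolution (2 * n + 2 * m) z = (γ * τ) z := by
    intro z hz
    have hzr : z ≠ r := fun h => by rw [h] at hz; omega
    have hzs : z ≠ s := fun h => by rw [h] at hz; omega
    have e1 : (γ * τ) z = γ z := by
      rw [mul_apply, hτdef, Equiv.swap_apply_of_ne_of_ne hzr hzs]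
    apply Fin.ext
    rw [e1, AuxG.gamma_val_even (by omega) (by omega) z hz,
        AuxG.interval_val_even hNmod z hz]
  have hUI : ∀ z, z ∈ U ↔ intervalInvolution (2 * n + 2 * m) z ∈ U := by
    intro z
    rcases Nat.even_or_odd z.val with he | ho
    · rw [hpt z (Nat.even_iff.mp he)]
      exact hUβ z
    · have hz : z.val % 2 = 1 := Nat.odd_iff.mp ho
      set w := intervalInvolution (2 * n + 2 * m) z with hwdef
      have hwval : w.val = z.val - 1 := AuxG.interval_val_odd z hz
      have hzpos : 1 ≤ z.val := by omega
      have hweven : w.val % 2 = 0 := by omega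
      have hIw : intervalInvolution (2 * n + 2 * m) w = z := AuxG.interval_invol hNmod z
      have hβw : (γ * τ) w = z := by rw [← hpt w hweven, hIw]
      have := hUβ w
      rw [hβw] at this
      exact this.symm
  have hall : ∀ g ∈ Subgroup.closure
      ({π, intervalInvolution (2 * n + 2 * m)} : Set (Equiv.Perm (Fin (2 * n + 2 * m)))),
      ∀ z, z ∈ U ↔ g z ∈ U := by
    intro g hg
    induction hg using Subgroup.closure_induction with
    | mem g hg =>
      rw [Set.mem_insert_iff, Set.mem_singleton_iff] at hg
      rcases hg with h | h <;> rw [h]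
      · exact hUπ
      · exact hUI
    | one => intro z; simp
    | mul g k hg hk ihg ihk =>
      intro z
      rw [mul_apply]
      exact (ihk z).trans (ihg (k z))
    | inv g hg ih =>
      intro z
      have h := ih (g⁻¹ z)
      rw [show g (g⁻¹ z) = z from g.apply_symm_apply z] at h
      exact h.symm
  obtain ⟨g, hg, hgxy⟩ := htrans x y
  exact hyU (by rw [← hgxy]; exact (hall g hg x).mp hxU)
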